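/- arXiv:1207.1838 — 2 statements merged into one kernel-verified Lean document; each statement's English description precedes it below -/
import Mathlib

section
/- For a connected graph G of order n and an integer k with 2 ≤ k ≤ n, 1 ≤ κ_k(G) ≤ n − ⌈k/2⌉, and both bounds are attained (trees attain the lower bound, K_n attains the upper bound). -/
open SimpleGraph
open scoped Classical

/-- An `S`-Steiner tree in `G`: a subgraph of `G` which is a tree and contains `S`. -/
def IsSteinerTree {V : Type*} (G : SimpleGraph V) (S : Set V) (T : G.Subgraph) : Prop :=
  S ⊆ T.verts ∧ T.coe.IsTree

/-- The generalized local connectivity `κ_G(S)`: the maximum number of pairwise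
internally disjoint `S`-Steiner trees in `G`. -/
noncomputable def steinerKappa {V : Type*} (G : SimpleGraph V) (S : Set V) : ℕ :=
  sSup {n | ∃ T : Fin n → G.Subgraph, (∀ i, IsSteinerTree G S (T i)) ∧
    ∀ i j, i ≠ j → (T i).edgeSet ∩ (T j).edgeSet = ∅ ∧ (T i).verts ∩ (T j).verts = S}

/-- The generalized local edge-connectivity `λ_G(S)`: the maximum number of pairwise
edge-disjoint `S`-Steiner trees in `G`. -/
noncomputable def steinerLambda {V : Type*} (G : SimpleGraph V) (S : Set V) : ℕ :=
  sSup {n | ∃ T : Fin n → G.Subgraph, (∀ i, IsSteinerTree G S (T i)) ∧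
    ∀ i j, i ≠ j → (T i).edgeSet ∩ (T j).edgeSet = ∅}

/-- The generalized `k`-connectivity `κ_k(G)` (with the convention that it is `0`
for a disconnected graph). -/
noncomputable def genKappa {V : Type*} [Fintype V] (G : SimpleGraph V) (k : ℕ) : ℕ :=
  if G.Connected then sInf {m | ∃ S : Finset V, S.card = k ∧ steinerKappa G ↑S = m} else 0

/-- The generalized `k`-edge-connectivity `λ_k(G)` (with the convention that it is `0`
for a disconnected graph). -/
noncomputable def genLambda {V : Type*} [Fintype V] (G : SimpleGraph V) (k : ℕ) : ℕ :=
  if G.Connected then sInf {m | ∃ S : Finset V, S.card = k ∧ steinerLambda G ↑S = m} else 0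

/-- The edge-connectivity `λ(G)`: the minimum number of edges whose removal disconnects `G`. -/
noncomputable def edgeConn {V : Type*} [Fintype V] (G : SimpleGraph V) : ℕ :=
  sInf {m | ∃ F : Set (Sym2 V), F ⊆ G.edgeSet ∧ F.ncard = m ∧ ¬ (G.deleteEdges F).Connected}

/-- The vertex connectivity `κ(G)`: the minimum size of a vertex set whose removal
disconnects `G` or leaves at most one vertex. -/
noncomputable def vertexConn {V : Type*} [Fintype V] (G : SimpleGraph V) : ℕ :=
  sInf {m | ∃ S : Finset V, S.card = m ∧
    (¬ (G.induce ((↑S : Set V)ᶜ)).Connected ∨ Fintype.card V ≤ m + 1)}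

section AuxLemmas
variable {V : Type*}





lemma reach_del {G : SimpleGraph V} {v w : V}
    (hr : (G \ fromEdgeSet {s(v,w)}).Reachable v w) :
    ∀ {a b : V}, G.Walk a b → (G \ fromEdgeSet {s(v,w)}).Reachable a b := by
  intro a b p
  induction p with
  | nil => exact Reachable.refl _
  | cons h q ih =>
    rename_i x y z
    refine Reachable.trans ?_ ih
    by_cases he : s(x,y) = s(v,w)
    · rw [Sym2.eq_iff] at he
      rcases he with ⟨rfl, rfl⟩ | ⟨rfl, rfl⟩
      · exact hr
      · exact hr.symm
    · exact Adj.reachable (by simp [h, he, h.ne])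

lemma exists_spanning_tree [Fintype V] (G : SimpleGraph V) (hG : G.Connected) :
    ∃ H ≤ G, H.IsTree := by
  generalize hm : G.edgeSet.ncard = m
  induction m using Nat.strong_induction_on generalizing G with
  | _ m ih =>
    by_cases ha : G.IsAcyclic
    · exact ⟨G, le_rfl, ⟨hG, ha⟩⟩
    · simp only [IsAcyclic, not_forall, not_not] at ha
      obtain ⟨u, c, hc⟩ := ha
      have hne : c.edges ≠ [] := by
        intro h
        have h3 := hc.three_le_length
        have h2 : c.edges.length = c.length := c.length_edges
        rw [h] at h2
        simp at h2
        omega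
      obtain ⟨e, he⟩ := List.exists_mem_of_ne_nil _ hne
      induction e using Sym2.ind with
      | _ v w =>
      have hadj : G.Adj v w := c.adj_of_mem_edges he
      have hreach : (G \ fromEdgeSet {s(v,w)}).Reachable v w :=
        (adj_and_reachable_delete_edges_iff_exists_cycle.mpr ⟨u, c, hc, he⟩).2
      set G' := G \ fromEdgeSet {s(v,w)} with hG'
      have hG'le : G' ≤ G := sdiff_le
      have hG'conn : G'.Connected := by
        have : Nonempty V := hG.nonempty
        exact Connected.mk (fun a b => reach_del hreach ((hG.preconnected a b).some))
      have hedge : G'.edgeSet = G.edgeSet \ {s(v,w)} := by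
        rw [hG', edgeSet_sdiff, edgeSet_fromEdgeSet, edgeSet_sdiff_sdiff_isDiag]
      have hcard : G'.edgeSet.ncard < m := by
        rw [← hm, hedge]
        refine Set.ncard_lt_ncard ?_ (G.edgeSet.toFinite)
        refine (Set.ssubset_iff_of_subset Set.diff_subset).mpr ⟨s(v,w), hadj, by simp⟩
      obtain ⟨H, hH, hHt⟩ := ih _ hcard G' hG'conn rfl
      exact ⟨H, hH.trans hG'le, hHt⟩
variable {W : Type*}


lemma isTree_of_connected_of_card [Fintype V] (G : SimpleGraph V) (hc : G.Connected)
    (hcard : G.edgeFinset.card + 1 = Fintype.card V) : G.IsTree := by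
  obtain ⟨H, hle, hH⟩ := exists_spanning_tree G hc
  have hHc := hH.card_edgeFinset
  have hsub : H.edgeFinset ⊆ G.edgeFinset := edgeFinset_subset_edgeFinset.mpr hle
  have : H.edgeFinset = G.edgeFinset :=
    Finset.eq_of_subset_of_card_le hsub (by omega)
  rwa [← edgeFinset_inj.mp this]

lemma iso_isTree {G : SimpleGraph V} {H : SimpleGraph W} (e : G ≃g H) (h : G.IsTree) :
    H.IsTree := by
  constructor
  · exact h.isConnected.map e.toHom e.toEquiv.surjective
  · intro v c hc
    have : (c.map e.symm.toHom).IsCycle := hc.map e.symm.toEquiv.injective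
    exact h.IsAcyclic _ this



lemma isTree_parent [Fintype W] (H : SimpleGraph W) (r : W) (p : W → W) (f : W → ℕ)
    (hadj : ∀ a b, H.Adj a b ↔ (a ≠ r ∧ p a = b) ∨ (b ≠ r ∧ p b = a))
    (hf : ∀ a, a ≠ r → f (p a) < f a) : H.IsTree := by
  have hreach : ∀ a, H.Reachable a r := by
    have key : ∀ (n : ℕ) (a : W), f a ≤ n → H.Reachable a r := by
      intro n
      induction n with
      | zero =>
        intro a ha
        by_cases h : a = r
        · exact h ▸ Reachable.refl _
        · exact absurd (hf a h) (by omega)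
      | succ n ih =>
        intro a ha
        by_cases h : a = r
        · exact h ▸ Reachable.refl _
        · have hadj' : H.Adj a (p a) := (hadj a (p a)).mpr (Or.inl ⟨h, rfl⟩)
          exact hadj'.reachable.trans (ih (p a) (by have := hf a h; omega))
    exact fun a => key (f a) a le_rfl
  have hconn : H.Connected := by
    have : Nonempty W := ⟨r⟩
    exact Connected.mk (fun a b => (hreach a).trans (hreach b).symm)
  refine isTree_of_connected_of_card H hconn ?_
  -- edge count
  have himg : H.edgeFinset = (Finset.univ.filter (· ≠ r)).image (fun a => s(a, p a)) := by
    ext e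
    induction e using Sym2.ind with
    | _ u v =>
      simp only [mem_edgeFinset, mem_edgeSet, hadj, Finset.mem_image, Finset.mem_filter,
        Finset.mem_univ, true_and]
      constructor
      · rintro (⟨h1, h2⟩ | ⟨h1, h2⟩)
        · exact ⟨u, h1, by rw [h2]⟩
        · exact ⟨v, h1, by rw [h2, Sym2.eq_swap]⟩
      · rintro ⟨a, ha, he⟩
        rw [Sym2.eq_iff] at he
        rcases he with ⟨rfl, rfl⟩ | ⟨rfl, rfl⟩
        · exact Or.inl ⟨ha, rfl⟩
        · exact Or.inr ⟨ha, rfl⟩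
  have hinj : Set.InjOn (fun a => s(a, p a)) ↑(Finset.univ.filter (· ≠ r)) := by
    intro a ha b hb he
    simp only [Finset.coe_filter, Set.mem_setOf_eq, Finset.mem_univ, true_and] at ha hb
    simp only [Sym2.eq_iff] at he
    rcases he with ⟨rfl, -⟩ | ⟨h1, h2⟩
    · rfl
    · exfalso
      have t1 := hf a ha
      have t2 := hf b hb
      rw [← h1] at t2
      rw [h2] at t1
      omega
  rw [himg, Finset.card_image_of_injOn hinj]
  have : (Finset.univ.filter (· ≠ r)).card = Fintype.card W - 1 := by
    rw [Finset.filter_ne' Finset.univ r, Finset.card_erase_of_mem (Finset.mem_univ r),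
      Finset.card_univ]
  rw [this]
  have : 1 ≤ Fintype.card W := Fintype.card_pos_iff.mpr ⟨r⟩
  omega
variable {V : Type*}


lemma steiner_upper [Fintype V] (G : SimpleGraph V) (S : Finset V) (k : ℕ) (hS : S.card = k)
    (hk : 2 ≤ k) {t : ℕ} (T : Fin t → G.Subgraph)
    (hT : ∀ i, IsSteinerTree G ↑S (T i))
    (hd : ∀ i j, i ≠ j → (T i).edgeSet ∩ (T j).edgeSet = ∅ ∧ (T i).verts ∩ (T j).verts = ↑S) :
    t ≤ (Fintype.card V - k) + k / 2 := by
  classical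
  set A : Finset (Fin t) := Finset.univ.filter (fun i => (T i).verts = ↑S) with hA
  set B : Finset (Fin t) := Finset.univ.filter (fun i => ¬ (T i).verts = ↑S) with hB
  have hsplit : A.card + B.card = t := by
    rw [hA, hB, Finset.card_filter_add_card_filter_not, Finset.card_univ, Fintype.card_fin]
  -- B bound
  have hBex : ∀ i ∈ B, ∃ v, v ∈ (T i).verts ∧ v ∉ S := by
    intro i hi
    rw [hB, Finset.mem_filter] at hi
    obtain ⟨v, hv1, hv2⟩ := Set.exists_of_ssubset (ssubset_of_subset_of_ne (hT i).1 (Ne.symm hi.2))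
    exact ⟨v, hv1, by simpa using hv2⟩
  choose vx hvx1 hvx2 using hBex
  obtain ⟨s0, hs0⟩ : S.Nonempty := Finset.card_pos.mp (by omega)
  set vx' : Fin t → V := fun i => if h : i ∈ B then vx i h else s0 with hvx'
  have hBcard : B.card ≤ Fintype.card V - k := by
    have : B.card ≤ Sᶜ.card := by
      refine Finset.card_le_card_of_injOn vx' (fun i hi => Finset.mem_compl.mpr ?_) ?_
      · have hi' : i ∈ B := Finset.mem_coe.mp hi; simp only [vx', dif_pos hi']; exact hvx2 i hi'
      · intro i hi j hj hij
        simp only [Finset.mem_coe] at hi hj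
        by_contra hne
        have h := (hd i j hne).2
        simp only [vx', dif_pos hi, dif_pos hj] at hij
        have : vx i hi ∈ (T i).verts ∩ (T j).verts := ⟨hvx1 i hi, hij ▸ hvx1 j hj⟩
        rw [h] at this
        exact hvx2 i hi (by simpa using this)
    rwa [Finset.card_compl, hS] at this
  -- A bound
  set F : Fin t → Finset (Sym2 V) := fun i => (T i).edgeSet.toFinset with hF
  have hFcard : ∀ i ∈ A, (F i).card = k - 1 := by
    intro i hi
    rw [hA, Finset.mem_filter] at hi
    have htree := (hT i).2
    have hcv : Fintype.card (T i).verts = k := by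
      rw [hi.2]
      simp [hS]
    have hec := htree.card_edgeFinset
    rw [hcv] at hec
    have e1 : (F i).card = (T i).edgeSet.ncard := (Set.ncard_eq_toFinset_card' _).symm
    have e2 : (T i).edgeSet.ncard = (T i).coe.edgeSet.ncard := by
      rw [← Subgraph.image_coe_edgeSet_coe]
      exact Set.ncard_image_of_injective _ (Sym2.map.injective Subtype.val_injective)
    have e3 : (T i).coe.edgeSet.ncard = (T i).coe.edgeFinset.card := by
      rw [← Set.ncard_coe_finset, coe_edgeFinset]
    omega
  have hFdisj : ∀ i ∈ A, ∀ j ∈ A, i ≠ j → Disjoint (F i) (F j) := by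
    intro i _ j _ hij
    rw [Finset.disjoint_left]
    intro e he1 he2
    rw [hF, Set.mem_toFinset] at he1 he2
    have := (hd i j hij).1
    have : e ∈ (T i).edgeSet ∩ (T j).edgeSet := ⟨he1, he2⟩
    rw [(hd i j hij).1] at this
    exact this
  have hbiU : (A.biUnion F).card = A.card * (k - 1) := by
    rw [Finset.card_biUnion hFdisj]
    rw [Finset.sum_congr rfl hFcard]
    simp [mul_comm]
  have hbiUle : (A.biUnion F).card ≤ k * (k - 1) / 2 := by
    have hex : ∀ e ∈ A.biUnion F, ∃ z : Sym2 ↥S, ¬z.IsDiag ∧ Sym2.map (↑·) z = e := by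
      intro e he
      rw [Finset.mem_biUnion] at he
      obtain ⟨i, hi, hei⟩ := he
      rw [hF, Set.mem_toFinset] at hei
      rw [hA, Finset.mem_filter] at hi
      induction e using Sym2.ind with
      | _ u v =>
        have hadj : (T i).Adj u v := hei
        have hu : u ∈ S := by have := (T i).edge_vert hadj; rw [hi.2] at this; simpa using this
        have hv : v ∈ S := by
          have := (T i).edge_vert hadj.symm; rw [hi.2] at this; simpa using this
        refine ⟨s(⟨u, hu⟩, ⟨v, hv⟩), ?_, by simp⟩
        rw [Sym2.mk_isDiag_iff, Subtype.mk_eq_mk]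
        exact hadj.ne
    choose! z hz1 hz2 using hex
    have hcard : (A.biUnion F).card ≤ Fintype.card {z : Sym2 ↥S // ¬z.IsDiag} := by
      rw [← Fintype.card_coe]
      refine Fintype.card_le_of_injective (fun e => ⟨z e.1 e.2, hz1 e.1 e.2⟩) ?_
      intro e1 e2 h12
      have h' : z ↑e1 e1.2 = z ↑e2 e2.2 := Subtype.ext_iff.mp h12
      apply Subtype.ext
      rw [← hz2 ↑e1 e1.2, ← hz2 ↑e2 e2.2, h']
    rw [Sym2.card_subtype_not_diag, Fintype.card_coe, hS, Nat.choose_two_right] at hcard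
    exact hcard
  have hAcard : A.card ≤ k / 2 := by
    have h1 : A.card * (k - 1) ≤ k * (k - 1) / 2 := hbiU ▸ hbiUle
    have heven : Even (k * (k - 1)) := by
      have := Nat.even_mul_succ_self (k - 1)
      have hkk : (k - 1) + 1 = k := by omega
      rw [hkk] at this
      rwa [mul_comm]
    have h2 : k * (k - 1) / 2 * 2 = k * (k - 1) := Nat.div_two_mul_two_of_even heven
    have h3 : A.card * (k - 1) * 2 ≤ k * (k - 1) := by omega
    have h4 : (2 * A.card) * (k - 1) ≤ k * (k - 1) := by
      rw [show (2 * A.card) * (k - 1) = A.card * (k - 1) * 2 from by ring]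
      exact h3
    have h5 : 2 * A.card ≤ k := Nat.le_of_mul_le_mul_right h4 (by omega)
    omega
  omega




-- mapping walk edges into subgraph edge set
lemma walk_edge_mem {G : SimpleGraph V} (T : G.Subgraph) {x y : T.verts}
    (w : T.coe.Walk x y) {e : Sym2 V} (he : e ∈ (w.map T.hom).edges) : e ∈ T.edgeSet := by
  rw [Walk.edges_map, List.mem_map] at he
  obtain ⟨e', he', rfl⟩ := he
  have : e' ∈ T.coe.edgeSet := w.edges_subset_edgeSet he'
  rw [← Subgraph.image_coe_edgeSet_coe]
  exact ⟨e', this, rfl⟩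

lemma steiner_path {G : SimpleGraph V} {S : Set V} {T : G.Subgraph}
    (hT : IsSteinerTree G S T) {a b : V} (ha : a ∈ S) (hb : b ∈ S) :
    ∃ p : G.Walk a b, p.IsPath ∧ ∀ e ∈ p.edges, e ∈ T.edgeSet := by
  obtain ⟨w⟩ := hT.2.isConnected.preconnected ⟨a, hT.1 ha⟩ ⟨b, hT.1 hb⟩
  refine ⟨((w.map T.hom).toPath : G.Path a b).1, ((w.map T.hom).toPath : G.Path a b).2,
    fun e he => ?_⟩
  exact walk_edge_mem T w ((w.map T.hom).edges_toPath_subset he)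

lemma steiner_edge {G : SimpleGraph V} {S : Set V} {T : G.Subgraph}
    (hT : IsSteinerTree G S T) {a b : V} (ha : a ∈ S) (hb : b ∈ S) (hab : a ≠ b) :
    ∃ e ∈ T.edgeSet, True := by
  obtain ⟨p, hp, hpe⟩ := steiner_path hT ha hb
  cases p with
  | nil => exact absurd rfl hab
  | cons h q => exact ⟨_, hpe _ List.mem_cons_self, trivial⟩

lemma kappa_mem_bdd [Fintype V] {G : SimpleGraph V} {S : Finset V} (hS : 1 < S.card) {t : ℕ}
    (T : Fin t → G.Subgraph) (hT : ∀ i, IsSteinerTree G ↑S (T i))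
    (hd : ∀ i j, i ≠ j → (T i).edgeSet ∩ (T j).edgeSet = ∅) :
    t ≤ Fintype.card (Sym2 V) := by
  obtain ⟨a, ha, b, hb, hab⟩ := Finset.one_lt_card.mp hS
  have hex : ∀ i : Fin t, ∃ e, e ∈ (T i).edgeSet := by
    intro i
    obtain ⟨e, he, -⟩ := steiner_edge (hT i) (Finset.mem_coe.mpr ha) (Finset.mem_coe.mpr hb) hab
    exact ⟨e, he⟩
  choose ed hed using hex
  have hinj : Function.Injective ed := by
    intro i j hij
    by_contra hne
    have := hd i j hne
    have : ed i ∈ (T i).edgeSet ∩ (T j).edgeSet := ⟨hed i, hij ▸ hed j⟩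
    rw [hd i j hne] at this
    exact this
  simpa using Fintype.card_le_of_injective ed hinj

lemma tree_upper {G : SimpleGraph V} (hG : G.IsTree) {S : Set V} {a b : V}
    (ha : a ∈ S) (hb : b ∈ S) (hab : a ≠ b) {t : ℕ}
    (T : Fin t → G.Subgraph) (hT : ∀ i, IsSteinerTree G S (T i))
    (hd : ∀ i j, i ≠ j → (T i).edgeSet ∩ (T j).edgeSet = ∅) :
    t ≤ 1 := by
  by_contra h
  push_neg at h
  have h01 : (⟨0, by omega⟩ : Fin t) ≠ ⟨1, by omega⟩ := by simp [Fin.ext_iff]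
  obtain ⟨p0, hp0, he0⟩ := steiner_path (hT ⟨0, by omega⟩) ha hb
  obtain ⟨p1, hp1, he1⟩ := steiner_path (hT ⟨1, by omega⟩) ha hb
  have heq : p0 = p1 := (hG.existsUnique_path a b).unique hp0 hp1
  obtain ⟨e, he⟩ : ∃ e, e ∈ p0.edges := by
    cases p0 with
    | nil => exact absurd rfl hab
    | cons h q => exact ⟨_, List.mem_cons_self⟩
  have : e ∈ (T ⟨0, by omega⟩).edgeSet ∩ (T ⟨1, by omega⟩).edgeSet :=
    ⟨he0 e he, he1 e (heq ▸ he)⟩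
  rw [hd _ _ h01] at this
  exact this

-- existence of one Steiner tree
lemma exists_steiner [Fintype V] {G : SimpleGraph V} (hG : G.Connected) (S : Set V) :
    ∃ T : G.Subgraph, IsSteinerTree G S T := by
  obtain ⟨H, hle, hH⟩ := exists_spanning_tree G hG
  refine ⟨⟨Set.univ, H.Adj, fun hadj => hle hadj, fun _ => Set.mem_univ _, H.symm⟩,
    fun x _ => Set.mem_univ x, ?_⟩
  refine iso_isTree ?_ hH
  exact { toEquiv := (Equiv.Set.univ V).symm, map_rel_iff' := Iff.rfl }




/-- parent function for the `j`-th double star -/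
def dpa (j a : ℕ) : ℕ :=
  if a = 2*j+1 then 2*j else if j < a/2 then 2*j + a % 2 else 2*j + 1 - a % 2

def DRel (j a b : ℕ) : Prop := (a ≠ 2*j ∧ dpa j a = b) ∨ (b ≠ 2*j ∧ dpa j b = a)

lemma dpa_ne {j a : ℕ} (h : a ≠ 2*j) : dpa j a ≠ a := by unfold dpa; split_ifs <;> omega

lemma dpa_mem {j a : ℕ} : dpa j a = 2*j ∨ dpa j a = 2*j+1 := by unfold dpa; split_ifs <;> omega

lemma dpa_lt {k j a : ℕ} (hj : 2*j+1 < k) (ha : a < k) : dpa j a < k := by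
  unfold dpa; split_ifs <;> omega

lemma DRel_irr {j a : ℕ} (h : DRel j a a) : False := by
  rcases h with ⟨h1, h2⟩ | ⟨h1, h2⟩ <;> exact dpa_ne h1 h2

lemma DRel_symm {j a b : ℕ} (h : DRel j a b) : DRel j b a := h.symm

lemma DRel_disj {j j' a b : ℕ} (hjj : j ≠ j') (h1 : DRel j a b) (h2 : DRel j' a b) : False := by
  unfold DRel dpa at h1 h2
  split_ifs at h1 h2 <;> omega

section
variable [Fintype V] (S : Finset V) (k : ℕ) (hS : S.card = k)

noncomputable def sEquiv : ↥S ≃ Fin k :=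
  Fintype.equivFinOfCardEq (by simp [hS])

def starSub (c : V) (hc : c ∉ S) : (⊤ : SimpleGraph V).Subgraph where
  verts := insert c ↑S
  Adj u v := (u = c ∧ v ∈ S) ∨ (v = c ∧ u ∈ S)
  adj_sub := by
    rintro u v (⟨rfl, hv⟩ | ⟨rfl, hu⟩) <;> simp only [top_adj]
    · exact fun h => hc (h ▸ hv)
    · exact fun h => hc (h ▸ hu)
  edge_vert := by
    rintro u v (⟨rfl, hv⟩ | ⟨rfl, hu⟩)
    · exact Set.mem_insert _ _
    · exact Set.mem_insert_iff.mpr (Or.inr (by simpa using hu))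
  symm := ⟨by rintro u v (⟨rfl, hv⟩ | ⟨rfl, hu⟩); exacts [Or.inr ⟨rfl, hv⟩, Or.inl ⟨rfl, hu⟩]⟩

noncomputable def dstarSub (j : ℕ) : (⊤ : SimpleGraph V).Subgraph where
  verts := ↑S
  Adj u v := ∃ (hu : u ∈ S) (hv : v ∈ S),
    DRel j ((sEquiv S k hS ⟨u, hu⟩ : Fin k) : ℕ) ((sEquiv S k hS ⟨v, hv⟩ : Fin k) : ℕ)
  adj_sub := by
    rintro u v ⟨hu, hv, h⟩
    simp only [top_adj]
    rintro rfl
    exact DRel_irr h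
  edge_vert := by rintro u v ⟨hu, hv, h⟩; simpa using hu
  symm := ⟨by rintro u v ⟨hu, hv, h⟩; exact ⟨hv, hu, DRel_symm h⟩⟩

lemma starSub_verts (c : V) (hc : c ∉ S) : (starSub S c hc).verts = insert c ↑S := rfl

lemma dstarSub_verts (j : ℕ) : (dstarSub S k hS j).verts = ↑S := rfl

lemma starSub_isTree (c : V) (hc : c ∉ S) : (starSub S c hc).coe.IsTree := by
  have hrmem : c ∈ (starSub S c hc).verts := Set.mem_insert _ _
  refine isTree_parent _ ⟨c, hrmem⟩ (fun _ => ⟨c, hrmem⟩)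
    (fun u => if (u : V) = c then 0 else 1) ?_ ?_
  · intro a b
    have hcoe : ∀ x : (starSub S c hc).verts, ((x : V) ∈ S ↔ x ≠ ⟨c, hrmem⟩) := by
      intro x
      constructor
      · intro hx h
        rw [h] at hx
        exact hc hx
      · intro hx
        have hx2 : (x : V) ∈ insert c (↑S : Set V) := x.2
        rw [Set.mem_insert_iff] at hx2
        rcases hx2 with h | h
        · exact absurd (Subtype.ext h) hx
        · simpa using h
    constructor
    · rintro (⟨h1, h2⟩ | ⟨h1, h2⟩)
      · exact Or.inr ⟨(hcoe b).mp h2, Subtype.ext h1.symm⟩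
      · exact Or.inl ⟨(hcoe a).mp h2, Subtype.ext h1.symm⟩
    · rintro (⟨h1, h2⟩ | ⟨h1, h2⟩)
      · refine Or.inr ⟨?_, (hcoe a).mpr h1⟩
        have : b = ⟨c, hrmem⟩ := h2.symm
        exact congrArg Subtype.val this
      · refine Or.inl ⟨?_, (hcoe b).mpr h1⟩
        have : a = ⟨c, hrmem⟩ := h2.symm
        exact congrArg Subtype.val this
  · intro a ha
    have h1 : ((⟨c, hrmem⟩ : (starSub S c hc).verts) : V) = c := rfl
    have h2 : (a : V) ≠ c := fun h => ha (Subtype.ext h)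
    simp [h1, h2]

lemma dstarSub_isTree (j : ℕ) (hj : 2*j+1 < k) : (dstarSub S k hS j).coe.IsTree := by
  set σ := sEquiv S k hS with hσ
  set W := (dstarSub S k hS j).verts with hW
  have hWS : ∀ x : W, (x : V) ∈ S := fun x => by
    have : (x : V) ∈ (↑S : Set V) := x.2
    simpa using this
  set idx : W → ℕ := fun u => ((σ ⟨(u : V), hWS u⟩ : Fin k) : ℕ) with hidx
  have hidxlt : ∀ u, idx u < k := fun u => (σ ⟨(u : V), hWS u⟩).isLt
  have hidx_inj : Function.Injective idx := by
    intro a b h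
    have : σ ⟨(a : V), hWS a⟩ = σ ⟨(b : V), hWS b⟩ := Fin.ext h
    have := σ.injective this
    exact Subtype.ext (congrArg Subtype.val this)
  have hmemW : ∀ v : ↥S, (v : V) ∈ (dstarSub S k hS j).verts := fun v => by rw [dstarSub_verts]; exact v.2
  set r : W := ⟨(σ.symm ⟨2*j, by omega⟩ : ↥S), hmemW _⟩ with hr
  have hidxr : idx r = 2*j := by
    have h1 : (⟨(r : V), hWS r⟩ : ↥S) = σ.symm ⟨2*j, by omega⟩ := Subtype.ext rfl
    rw [hidx]
    simp only [h1, Equiv.apply_symm_apply]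
  have hner : ∀ a : W, a ≠ r ↔ idx a ≠ 2*j := by
    intro a
    constructor
    · intro h hi
      exact h (hidx_inj (by rw [hi, hidxr]))
    · intro h hi
      exact h (hi ▸ hidxr)
  set p : W → W := fun u =>
    ⟨(σ.symm ⟨dpa j (idx u), dpa_lt hj (hidxlt u)⟩ : ↥S), hmemW _⟩ with hp
  have hidxp : ∀ u, idx (p u) = dpa j (idx u) := by
    intro u
    have h1 : (⟨((p u) : V), hWS (p u)⟩ : ↥S) = σ.symm ⟨dpa j (idx u), dpa_lt hj (hidxlt u)⟩ :=
      Subtype.ext rfl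
    rw [hidx]
    simp only [h1, Equiv.apply_symm_apply]
    rfl
  have hadj : ∀ a b : W, (dstarSub S k hS j).coe.Adj a b ↔ DRel j (idx a) (idx b) := by
    intro a b
    constructor
    · rintro ⟨hu, hv, h⟩
      exact h
    · intro h
      exact ⟨hWS a, hWS b, h⟩
  refine isTree_parent _ r p (fun u => if idx u = 2*j then 0 else if idx u = 2*j+1 then 1 else 2)
    ?_ ?_
  · intro a b
    rw [hadj]
    unfold DRel
    rw [hner, hner]
    constructor
    · rintro (⟨h1, h2⟩ | ⟨h1, h2⟩)
      · exact Or.inl ⟨h1, hidx_inj (by rw [hidxp, h2])⟩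
      · exact Or.inr ⟨h1, hidx_inj (by rw [hidxp, h2])⟩
    · rintro (⟨h1, h2⟩ | ⟨h1, h2⟩)
      · exact Or.inl ⟨h1, by rw [← h2, hidxp]⟩
      · exact Or.inr ⟨h1, by rw [← h2, hidxp]⟩
  · intro a ha
    rw [hner] at ha
    have hpa := hidxp a
    by_cases h1 : idx a = 2*j+1
    · have : dpa j (idx a) = 2*j := by unfold dpa; rw [if_pos h1]
      rw [this] at hpa
      simp [hpa, h1, ha]
    · have hmem := @dpa_mem j (idx a)
      rcases hmem with h | h <;> rw [h] at hpa <;> simp [hpa, h1, ha] <;> omega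

include hS in
lemma kn_family (hk : 2 ≤ k) (hkn : k ≤ Fintype.card V) :
    ∃ T : Fin ((Fintype.card V - k) + k/2) → (⊤ : SimpleGraph V).Subgraph,
      (∀ i, IsSteinerTree (⊤ : SimpleGraph V) ↑S (T i)) ∧
      ∀ i j, i ≠ j → (T i).edgeSet ∩ (T j).edgeSet = ∅ ∧ (T i).verts ∩ (T j).verts = ↑S := by
  set m := Fintype.card V - k with hm
  have hcompl : Fintype.card ↥(Sᶜ : Finset V) = m := by
    simp [Finset.card_compl, hS, hm]
  set ρ : ↥(Sᶜ : Finset V) ≃ Fin m := Fintype.equivFinOfCardEq hcompl with hρ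
  set cc : Fin m → V := fun i => ↑(ρ.symm i) with hcc
  have hcc1 : ∀ i, cc i ∉ S := by
    intro i hmem
    have h2 := (ρ.symm i).2
    rw [Finset.mem_compl] at h2
    exact h2 hmem
  have hcc_inj : Function.Injective cc := by
    intro a b h
    have : ρ.symm a = ρ.symm b := Subtype.ext h
    simpa using congrArg ρ this
  have hj_lt : ∀ i : Fin (m + k/2), ¬ ((i : ℕ) < m) → 2*((i : ℕ) - m)+1 < k := by
    intro i h
    have := i.isLt
    omega
  set T : Fin (m + k/2) → (⊤ : SimpleGraph V).Subgraph := fun i =>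
    if h : (i : ℕ) < m then starSub S (cc ⟨i, h⟩) (hcc1 _)
    else dstarSub S k hS ((i : ℕ) - m) with hT
  refine ⟨T, ?_, ?_⟩
  · intro i
    simp only [hT]
    by_cases h : (i : ℕ) < m
    · rw [dif_pos h]
      exact ⟨Set.subset_insert _ _, starSub_isTree S _ _⟩
    · rw [dif_neg h]
      exact ⟨subset_rfl, dstarSub_isTree S k hS _ (hj_lt i h)⟩
  · intro i i' hne
    have hvalne : (i : ℕ) ≠ (i' : ℕ) := fun h => hne (Fin.ext h)
    simp only [hT]
    by_cases h : (i : ℕ) < m <;> by_cases h' : (i' : ℕ) < m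
    · -- star / star
      rw [dif_pos h, dif_pos h']
      have hcne : cc ⟨i, h⟩ ≠ cc ⟨i', h'⟩ := fun hcc' => hvalne (by
        simpa [Fin.ext_iff] using hcc_inj hcc')
      constructor
      · refine Set.eq_empty_iff_forall_notMem.mpr ?_
        intro e he
        induction e using Sym2.ind with
        | _ u v =>
          obtain ⟨h1, h2⟩ := he
          rw [Subgraph.mem_edgeSet] at h1 h2
          rcases h1 with ⟨rfl, hv1⟩ | ⟨rfl, hu1⟩ <;>
            rcases h2 with ⟨h2a, h2b⟩ | ⟨h2a, h2b⟩
          · exact hcne h2a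
          · exact hcc1 _ (h2a ▸ hv1)
          · exact hcc1 _ (h2a ▸ hu1)
          · exact hcne h2a
      · rw [starSub_verts, starSub_verts]
        ext x
        simp only [Set.mem_inter_iff, Set.mem_insert_iff, Finset.mem_coe]
        constructor
        · rintro ⟨rfl | hx, h2⟩
          · rcases h2 with h2 | h2
            · exact absurd h2 hcne
            · exact absurd h2 (hcc1 _)
          · exact hx
        · exact fun hx => ⟨Or.inr hx, Or.inr hx⟩
    · -- star / dstar
      rw [dif_pos h, dif_neg h']
      constructor
      · refine Set.eq_empty_iff_forall_notMem.mpr ?_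
        intro e he
        induction e using Sym2.ind with
        | _ u v =>
          obtain ⟨h1, h2⟩ := he
          rw [Subgraph.mem_edgeSet] at h1 h2
          obtain ⟨hu2, hv2, -⟩ := h2
          rcases h1 with ⟨rfl, -⟩ | ⟨rfl, -⟩
          · exact hcc1 _ hu2
          · exact hcc1 _ hv2
      · rw [starSub_verts, dstarSub_verts]
        rw [Set.insert_inter_of_notMem (by simpa using hcc1 ⟨i, h⟩), Set.inter_self]
    · -- dstar / star
      rw [dif_neg h, dif_pos h']
      constructor
      · refine Set.eq_empty_iff_forall_notMem.mpr ?_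
        intro e he
        induction e using Sym2.ind with
        | _ u v =>
          obtain ⟨h1, h2⟩ := he
          rw [Subgraph.mem_edgeSet] at h1 h2
          obtain ⟨hu2, hv2, -⟩ := h1
          rcases h2 with ⟨rfl, -⟩ | ⟨rfl, -⟩
          · exact hcc1 _ hu2
          · exact hcc1 _ hv2
      · rw [dstarSub_verts, starSub_verts]
        rw [Set.inter_comm, Set.insert_inter_of_notMem (by simpa using hcc1 ⟨i', h'⟩),
          Set.inter_self]
    · -- dstar / dstar
      rw [dif_neg h, dif_neg h']
      have hjj : (i : ℕ) - m ≠ (i' : ℕ) - m := by omega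
      constructor
      · refine Set.eq_empty_iff_forall_notMem.mpr ?_
        intro e he
        induction e using Sym2.ind with
        | _ u v =>
          obtain ⟨h1, h2⟩ := he
          rw [Subgraph.mem_edgeSet] at h1 h2
          obtain ⟨hu1, hv1, hd1⟩ := h1
          obtain ⟨hu2, hv2, hd2⟩ := h2
          exact DRel_disj hjj hd1 hd2
      · rw [dstarSub_verts, dstarSub_verts]
        exact Set.inter_self _
end
end AuxLemmas

theorem stmt4 {V : Type*} [Fintype V] (G : SimpleGraph V) (n k : ℕ)
    (hn : Fintype.card V = n) (hG : G.Connected) (hk : 2 ≤ k) (hkn : k ≤ n) :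
    (1 ≤ genKappa G k ∧ genKappa G k ≤ n - (k + 1) / 2) ∧
    (G.IsTree → genKappa G k = 1) ∧
    (G = ⊤ → genKappa G k = n - (k + 1) / 2) := by
  subst hn
  obtain ⟨S₀, -, hS₀⟩ := Finset.exists_subset_card_eq (s := Finset.univ) (n := k)
    (by simpa using hkn)
  -- facts about `steinerKappa G ↑S` for any `S` of size `k`
  have hbdd : ∀ S : Finset V, S.card = k →
      BddAbove {t | ∃ T : Fin t → G.Subgraph, (∀ i, IsSteinerTree G ↑S (T i)) ∧
        ∀ i j, i ≠ j → (T i).edgeSet ∩ (T j).edgeSet = ∅ ∧ (T i).verts ∩ (T j).verts = ↑S} := by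
    intro S hSc
    refine ⟨Fintype.card (Sym2 V), ?_⟩
    rintro t ⟨T, h1, h2⟩
    exact kappa_mem_bdd (by omega : 1 < S.card) T h1 (fun i j hij => (h2 i j hij).1)
  have hmem1 : ∀ S : Finset V, S.card = k →
      1 ∈ {t | ∃ T : Fin t → G.Subgraph, (∀ i, IsSteinerTree G ↑S (T i)) ∧
        ∀ i j, i ≠ j → (T i).edgeSet ∩ (T j).edgeSet = ∅ ∧ (T i).verts ∩ (T j).verts = ↑S} := by
    intro S hSc
    obtain ⟨T0, hT0⟩ := exists_steiner hG (↑S)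
    exact ⟨fun _ => T0, fun _ => hT0, fun i j hij => absurd (Subsingleton.elim i j) hij⟩
  have hlow : ∀ S : Finset V, S.card = k → 1 ≤ steinerKappa G ↑S := by
    intro S hSc
    exact le_csSup (hbdd S hSc) (hmem1 S hSc)
  have hup : ∀ S : Finset V, S.card = k →
      steinerKappa G ↑S ≤ (Fintype.card V - k) + k / 2 := by
    intro S hSc
    refine csSup_le ⟨1, hmem1 S hSc⟩ ?_
    rintro t ⟨T, h1, h2⟩
    exact steiner_upper G S k hSc hk T h1 h2
  have harith : (Fintype.card V - k) + k / 2 = Fintype.card V - (k + 1) / 2 := by omega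
  have hsetne : {m | ∃ S : Finset V, S.card = k ∧ steinerKappa G ↑S = m}.Nonempty :=
    ⟨steinerKappa G ↑S₀, S₀, hS₀, rfl⟩
  have hκ1 : 1 ≤ genKappa G k := by
    rw [genKappa, if_pos hG]
    refine le_csInf hsetne ?_
    rintro m ⟨S, hSc, rfl⟩
    exact hlow S hSc
  have hκ2 : genKappa G k ≤ Fintype.card V - (k + 1) / 2 := by
    rw [genKappa, if_pos hG]
    refine le_trans (Nat.sInf_le ⟨S₀, hS₀, rfl⟩) ?_
    rw [← harith]
    exact hup S₀ hS₀
  refine ⟨⟨hκ1, hκ2⟩, ?_, ?_⟩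
  · -- tree case
    intro htree
    refine le_antisymm ?_ hκ1
    rw [genKappa, if_pos hG]
    refine le_trans (Nat.sInf_le ⟨S₀, hS₀, rfl⟩) ?_
    obtain ⟨a, ha, b, hb, hab⟩ := Finset.one_lt_card.mp (by omega : 1 < S₀.card)
    refine csSup_le ⟨1, hmem1 S₀ hS₀⟩ ?_
    rintro t ⟨T, h1, h2⟩
    exact tree_upper htree (Finset.mem_coe.mpr ha) (Finset.mem_coe.mpr hb) hab T h1
      (fun i j hij => (h2 i j hij).1)
  · -- complete graph case
    rintro rfl
    refine le_antisymm hκ2 ?_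
    rw [genKappa, if_pos hG]
    refine le_csInf hsetne ?_
    rintro m ⟨S, hSc, rfl⟩
    obtain ⟨T, h1, h2⟩ := kn_family S k hSc hk hkn
    rw [← harith]
    exact le_csSup (hbdd S hSc) ⟨T, h1, h2⟩
end

section
/- Let S be a k-subset of V(G) and T a Steiner tree connecting S. If all edges of T lie in the induced subgraph G[S], then T has exactly k − 1 edges in E(G[S]) ∪ E_G[S, S̄]; if T contains at least one edge between S and its complement S̄, then T uses at least k edges of E(G[S]) ∪ E_G[S, S̄]. -/
open SimpleGraph
open scoped Classical

/-- The edges of `G` with both endpoints in `S` (the edges of `G[S]`). -/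
def insideEdges {V : Type*} (G : SimpleGraph V) (S : Set V) : Set (Sym2 V) :=
  {e ∈ G.edgeSet | ∀ v ∈ e, v ∈ S}

/-- The edges of `G` with exactly one endpoint in `S` (i.e. `E_G[S, S̄]`). -/
def crossEdges {V : Type*} (G : SimpleGraph V) (S : Set V) : Set (Sym2 V) :=
  {e ∈ G.edgeSet | (∃ v ∈ e, v ∈ S) ∧ ¬ ∀ v ∈ e, v ∈ S}

private lemma exists_adj_toward {W : Type*} {H : SimpleGraph W} (hc : H.Connected)
    {u r : W} (h : u ≠ r) :
    ∃ w, H.Adj u w ∧ H.dist w r + 1 = H.dist u r := by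
  obtain ⟨p, hp⟩ := hc.exists_walk_length_eq_dist u r
  cases p with
  | nil => exact absurd rfl h
  | @cons _ x _ ha q =>
    refine ⟨x, ha, ?_⟩
    have h1 : H.dist x r ≤ q.length := SimpleGraph.dist_le q
    have h2 : H.dist u r ≤ H.dist u x + H.dist x r := hc.dist_triangle
    have h3 : H.dist u x ≤ 1 := SimpleGraph.dist_le ha.toWalk
    rw [SimpleGraph.Walk.length_cons] at hp
    omega

private lemma tree_edge_count {V : Type*} [Fintype V] {G : SimpleGraph V} (T : G.Subgraph)
    (h : T.coe.IsTree) : T.edgeSet.ncard + 1 = T.verts.ncard := by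
  classical
  have hcard := h.card_edgeFinset
  have h1 : T.coe.edgeSet.ncard = T.edgeSet.ncard := by
    rw [← T.image_coe_edgeSet_coe]
    exact (Set.ncard_image_of_injective _ (Sym2.map.injective Subtype.val_injective)).symm
  have h2 : T.coe.edgeSet.ncard = T.coe.edgeFinset.card := by
    rw [Set.ncard_eq_toFinset_card', SimpleGraph.edgeFinset]
  have h3 : T.verts.ncard = Fintype.card T.verts := by
    rw [Set.ncard_eq_toFinset_card', Set.toFinset_card]
  rw [← h1, h2, h3, hcard]

theorem stmt13 {V : Type*} [Fintype V] (G : SimpleGraph V) (S : Finset V) (k : ℕ)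
    (hS : S.card = k) (T : G.Subgraph) (hT : IsSteinerTree G ↑S T) :
    (T.edgeSet ⊆ insideEdges G ↑S →
      (T.edgeSet ∩ (insideEdges G ↑S ∪ crossEdges G ↑S)).ncard = k - 1) ∧
    ((∃ e ∈ T.edgeSet, e ∈ crossEdges G ↑S) →
      k ≤ (T.edgeSet ∩ (insideEdges G ↑S ∪ crossEdges G ↑S)).ncard) := by
  classical
  obtain ⟨hsub, htree⟩ := hT
  have hconn : T.coe.Connected := htree.isConnected
  constructor
  · intro hin
    have heq : T.edgeSet ∩ (insideEdges G ↑S ∪ crossEdges G ↑S) = T.edgeSet :=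
      Set.inter_eq_self_of_subset_left (le_trans hin Set.subset_union_left)
    rw [heq]
    by_cases hS0 : S = ∅
    · have hk : k = 0 := by simp [hS0] at hS; omega
      have hE : T.edgeSet = ∅ := by
        ext e
        simp only [Set.mem_empty_iff_false, iff_false]
        intro he
        obtain ⟨a, b⟩ := e
        have := (hin he).2 a (by simp)
        simp [hS0] at this
      rw [hE, hk]
      simp
    · -- S nonempty : T.verts = ↑S
      obtain ⟨s, hs⟩ := Finset.nonempty_iff_ne_empty.2 hS0
      have hverts : T.verts = (↑S : Set V) := by
        apply Set.Subset.antisymm _ hsub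
        intro v hv
        by_contra hvS
        have hsv : s ∈ T.verts := hsub (by simpa using hs)
        have hne : (⟨v, hv⟩ : T.verts) ≠ ⟨s, hsv⟩ := by
          intro h
          have hv2 : v = s := congrArg Subtype.val h
          subst hv2
          exact hvS (by simpa using hs)
        obtain ⟨w, hadj, _⟩ := exists_adj_toward hconn hne
        have hTadj : T.Adj v w.val := hadj
        have hmem : s(v, w.val) ∈ T.edgeSet := hTadj
        have := (hin hmem).2 v (by simp)
        exact hvS this
      have := tree_edge_count T htree
      rw [hverts, Set.ncard_coe_finset, hS] at this
      omega
  · rintro ⟨e, heT, heC⟩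
    obtain ⟨heG, -, hnotall⟩ := heC
    push_neg at hnotall
    obtain ⟨r, hre, hrS⟩ := hnotall
    have hrT : r ∈ T.verts := SimpleGraph.Subgraph.mem_verts_of_mem_edge heT hre
    set rt : T.verts := ⟨r, hrT⟩ with hrt
    have key : ∀ s : T.verts, s.val ∈ S →
        ∃ w : T.verts, T.coe.Adj s w ∧ T.coe.dist w rt + 1 = T.coe.dist s rt := by
      intro s hsS
      apply exists_adj_toward hconn
      intro h
      rw [h] at hsS
      exact hrS hsS
    choose w hw1 hw2 using key
    set A := T.edgeSet ∩ (insideEdges G ↑S ∪ crossEdges G ↑S) with hA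
    have hAfin : A.Finite := Set.toFinite _
    set f : V → Sym2 V := fun v =>
      if h : v ∈ T.verts ∧ v ∈ S then s(v, (w ⟨v, h.1⟩ h.2).val) else s(r, r) with hf
    have hmaps : ∀ v ∈ (↑S : Set V), f v ∈ A := by
      intro v hv
      have hvS : v ∈ S := hv
      have hvT : v ∈ T.verts := hsub hv
      have hder : f v = s(v, (w ⟨v, hvT⟩ hvS).val) := dif_pos ⟨hvT, hvS⟩
      rw [hder]
      have hTadj : T.Adj v (w ⟨v, hvT⟩ hvS).val := hw1 ⟨v, hvT⟩ hvS
      refine ⟨hTadj, ?_⟩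
      have hGe : s(v, (w ⟨v, hvT⟩ hvS).val) ∈ G.edgeSet := T.adj_sub hTadj
      by_cases hall : ∀ u ∈ s(v, (w ⟨v, hvT⟩ hvS).val), u ∈ (↑S : Set V)
      · exact Or.inl ⟨hGe, hall⟩
      · exact Or.inr ⟨hGe, ⟨v, by simp, hv⟩, hall⟩
    have hinj : Set.InjOn f (↑S : Set V) := by
      intro v1 hv1 v2 hv2 hfeq
      have hv1S : v1 ∈ S := hv1
      have hv2S : v2 ∈ S := hv2
      have hv1T : v1 ∈ T.verts := hsub hv1
      have hv2T : v2 ∈ T.verts := hsub hv2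
      rw [show f v1 = s(v1, (w ⟨v1, hv1T⟩ hv1S).val) from dif_pos ⟨hv1T, hv1S⟩,
        show f v2 = s(v2, (w ⟨v2, hv2T⟩ hv2S).val) from dif_pos ⟨hv2T, hv2S⟩,
        Sym2.eq_iff] at hfeq
      rcases hfeq with ⟨h1, -⟩ | ⟨h1, h2⟩
      · exact h1
      · exfalso
        have e1 : (⟨v1, hv1T⟩ : T.verts) = w ⟨v2, hv2T⟩ hv2S := Subtype.ext h1
        have e2 : w ⟨v1, hv1T⟩ hv1S = (⟨v2, hv2T⟩ : T.verts) := Subtype.ext h2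
        have d1 := hw2 ⟨v1, hv1T⟩ hv1S
        have d2 := hw2 ⟨v2, hv2T⟩ hv2S
        rw [e2] at d1
        rw [← e1] at d2
        omega
    have hle : (↑S : Set V).ncard ≤ A.ncard :=
      Set.ncard_le_ncard_of_injOn f hmaps hinj hAfin
    rwa [Set.ncard_coe_finset, hS] at hle
end
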